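/- Let 0 ≤ l ≤ n. Then a_l^{−1} = a_l, and for every i ∈ {1, …, n−1} with i ≠ l one has a_l s_i a_l = s_{l−i} if i < l, and a_l s_i a_l = s_i if i > l. In particular a_l normalizes the subgroup 𝔖_{l,n−l}. -/

import Mathlib

/-!
Common setup: the Weyl group `W n` of type `B_n`, realized as the group of
permutations `w` of `I_n = {±1, …, ±n}` (inside `Equiv.Perm ℤ`, fixing every
integer of absolute value `> n`) such that `w (-i) = - w i` for all `i`.
-/

namespace TypeB

/-- The generator `t = (1, -1)`. -/
def t : Equiv.Perm ℤ := Equiv.swap 1 (-1)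

/-- The generator `s i = (i, i+1)(-i, -(i+1))` (meaningful for `1 ≤ i`). -/
def s (i : ℕ) : Equiv.Perm ℤ :=
  Equiv.swap (i : ℤ) ((i : ℤ) + 1) * Equiv.swap (-(i : ℤ)) (-((i : ℤ) + 1))

/-- The generating set `S_n = {t, s_1, …, s_{n-1}}`. -/
def gens (n : ℕ) : Set (Equiv.Perm ℤ) :=
  {t} ∪ {x | ∃ i : ℕ, 1 ≤ i ∧ i < n ∧ x = s i}

/-- The Weyl group `W_n` of type `B_n`, as a subgroup of `Equiv.Perm ℤ`:
permutations `w` with `w (-i) = - (w i)` for all `i` and fixing all `i` with `|i| > n`. -/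
def W (n : ℕ) : Subgroup (Equiv.Perm ℤ) where
  carrier := {w | (∀ i : ℤ, w (-i) = - w i) ∧ ∀ i : ℤ, (n : ℤ) < |i| → w i = i}
  one_mem' := ⟨fun _ => rfl, fun _ _ => rfl⟩
  mul_mem' := by
    rintro u v ⟨hu1, hu2⟩ ⟨hv1, hv2⟩
    refine ⟨fun i => ?_, fun i hi => ?_⟩
    · simp only [Equiv.Perm.mul_apply, hv1, hu1]
    · simp only [Equiv.Perm.mul_apply, hv2 i hi, hu2 i hi]
  inv_mem' := by
    rintro u ⟨hu1, hu2⟩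
    refine ⟨fun i => ?_, fun i hi => ?_⟩
    · apply u.injective
      rw [Equiv.Perm.coe_inv, Equiv.apply_symm_apply, hu1, Equiv.apply_symm_apply]
    · apply u.injective
      rw [Equiv.Perm.coe_inv, Equiv.apply_symm_apply, hu2 i hi]

/-- The length of `w` with respect to the generating set `S_n`. -/
noncomputable def len (n : ℕ) (w : Equiv.Perm ℤ) : ℕ :=
  sInf {k | ∃ l : List (Equiv.Perm ℤ), (∀ x ∈ l, x ∈ gens n) ∧ l.prod = w ∧ l.length = k}

/-- `l` is a reduced expression for `w` with respect to `S_n`. -/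
def IsReduced (n : ℕ) (w : Equiv.Perm ℤ) (l : List (Equiv.Perm ℤ)) : Prop :=
  (∀ x ∈ l, x ∈ gens n) ∧ l.prod = w ∧ l.length = len n w

/-- `ℓ_t w`: the number of occurrences of `t` in a reduced expression of `w`
(independent of the chosen reduced expression). -/
noncomputable def lent (n : ℕ) (w : Equiv.Perm ℤ) : ℕ :=
  letI : DecidableEq (Equiv.Perm ℤ) := Classical.decEq _
  sInf {m | ∃ l, IsReduced n w l ∧ l.count t = m}

/-- `r 1 = t` and `r (i+1) = s i * r i`. -/
def r : ℕ → Equiv.Perm ℤ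
  | 0 => 1
  | 1 => t
  | (i + 2) => s (i + 1) * r (i + 1)

/-- `t_1 = t` and `t_{i+1} = s_i * t_i * s_i`. -/
def tperm : ℕ → Equiv.Perm ℤ
  | 0 => 1
  | 1 => t
  | (i + 2) => s (i + 1) * tperm (i + 1) * s (i + 1)

/-- `a l = r 1 * r 2 * ⋯ * r l`, with `a 0 = 1`. -/
def a : ℕ → Equiv.Perm ℤ
  | 0 => 1
  | (l + 1) => a l * r (l + 1)

/-- The symmetric group `𝔖_n`: the subgroup generated by `s_1, …, s_{n-1}`. -/
def Sym (n : ℕ) : Subgroup (Equiv.Perm ℤ) :=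
  Subgroup.closure {x | ∃ i : ℕ, 1 ≤ i ∧ i < n ∧ x = s i}

/-- The parabolic subgroup `𝔖_{l,n-l}`: generated by `{s_1, …, s_{n-1}} \ {s_l}`. -/
def SymP (n l : ℕ) : Subgroup (Equiv.Perm ℤ) :=
  Subgroup.closure {x | ∃ i : ℕ, 1 ≤ i ∧ i < n ∧ i ≠ l ∧ x = s i}

/-- `Y_{l,n-l}`: elements of `𝔖_n` of minimal length in their coset `w 𝔖_{l,n-l}`. -/
def Y (n l : ℕ) : Set (Equiv.Perm ℤ) :=
  {w | w ∈ Sym n ∧ ∀ u ∈ SymP n l, len n w ≤ len n (w * u)}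

/-- The subgroup `𝔖_{[i,j]}` generated by `s_i, …, s_{j-1}`. -/
def SymI (i j : ℕ) : Subgroup (Equiv.Perm ℤ) :=
  Subgroup.closure {x | ∃ k : ℕ, i ≤ k ∧ k < j ∧ x = s k}

/-- The function reversing the interval `[i,j]` (and `[-j,-i]`), for `1 ≤ i`. -/
def revFun (i j : ℤ) : ℤ → ℤ := fun k =>
  if 1 ≤ i ∧ i ≤ k ∧ k ≤ j then i + j - k
  else if 1 ≤ i ∧ -j ≤ k ∧ k ≤ -i then -(i + j) - k
  else k

lemma revFun_involutive (i j : ℤ) : Function.Involutive (revFun i j) := by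
  intro k
  unfold revFun
  split_ifs <;> omega

/-- `σ_{[i,j]}`: the longest element of `𝔖_{[i,j]}`, i.e. the order-reversing
permutation of the interval `[i,j]` (extended to `I_n` by `w(-k) = -w(k)`). -/
def sigmaI (i j : ℕ) : Equiv.Perm ℤ := (revFun_involutive (i : ℤ) (j : ℤ)).toPerm

/-- `σ_{l,n-l}`: the longest element of `𝔖_{l,n-l} = 𝔖_{[1,l]} × 𝔖_{[l+1,n]}`. -/
def sigmaLL (n l : ℕ) : Equiv.Perm ℤ := sigmaI 1 l * sigmaI (l + 1) n

/-- The function negating all `k` with `|k| ≤ n`. -/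
def negnFun (n : ℤ) : ℤ → ℤ := fun k => if -n ≤ k ∧ k ≤ n then -k else k

lemma negnFun_involutive (n : ℤ) : Function.Involutive (negnFun n) := by
  intro k
  unfold negnFun
  split_ifs <;> omega

/-- `w_n`: the longest element of `W_n`; as a permutation, `w_n i = -i` for `|i| ≤ n`. -/
def wlong (n : ℕ) : Equiv.Perm ℤ := (negnFun_involutive (n : ℤ)).toPerm

/-- `c_I = s_{i_1} s_{i_2} ⋯ s_{i_k}` for `I = {i_1 < i_2 < ⋯ < i_k}`. -/
def cElt (I : Finset ℕ) : Equiv.Perm ℤ := ((I.sort (· ≤ ·)).map s).prod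

/-- `d_I = s_{i_k} ⋯ s_{i_2} s_{i_1}` for `I = {i_1 < i_2 < ⋯ < i_k}`. -/
def dElt (I : Finset ℕ) : Equiv.Perm ℤ := (((I.sort (· ≤ ·)).map s).reverse).prod

/-- `X_n^{(m)}`: elements of `W_n` of minimal length in their coset `w W_m`. -/
def X (n m : ℕ) : Set (Equiv.Perm ℤ) :=
  {w | w ∈ W n ∧ ∀ u ∈ W m, len n w ≤ len n (w * u)}

/-- Bruhat order: `x ≤ y` iff some reduced expression of `y` contains a subword
which is a reduced expression of `x`. -/
def BruhatLE (n : ℕ) (x y : Equiv.Perm ℤ) : Prop :=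
  ∃ ly, IsReduced n y ly ∧ ∃ lx, lx.Sublist ly ∧ IsReduced n x lx

/-- Strict Bruhat order. -/
def BruhatLT (n : ℕ) (x y : Equiv.Perm ℤ) : Prop := BruhatLE n x y ∧ x ≠ y

/-- `D_i(W_n)`: the set of `x` such that exactly one of `s_i, s_{i+1}` is a
(right) descent of `x`. -/
def Dset (n i : ℕ) : Set (Equiv.Perm ℤ) :=
  {x | Xor' (len n (x * s i) < len n x) (len n (x * s (i + 1)) < len n x)}

open Classical in
/-- `γ_i x`: the unique element of `{x s_i, x s_{i+1}} ∩ D_i(W_n)` (for `x ∈ D_i(W_n)`). -/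
noncomputable def gamma (n i : ℕ) (x : Equiv.Perm ℤ) : Equiv.Perm ℤ :=
  if x * s i ∈ Dset n i then x * s i else x * s (i + 1)

/-- `E_m^{(r)}`: the set of `w ∈ W_m` such that `|w 1| > |w i|` for `2 ≤ i ≤ r+2`
and `(w 2, …, w (r+2))` is a shuffle of a positive decreasing sequence and a
negative increasing sequence. -/
def E (m ρ : ℕ) : Set (Equiv.Perm ℤ) :=
  {w | w ∈ W m ∧ (∀ i : ℕ, 2 ≤ i → i ≤ ρ + 2 → |w (i : ℤ)| < |w (1 : ℤ)|) ∧
    ∀ i j : ℕ, 2 ≤ i → i < j → j ≤ ρ + 2 →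
      (0 < w (i : ℤ) → 0 < w (j : ℤ) → w (j : ℤ) < w (i : ℤ)) ∧
      (w (i : ℤ) < 0 → w (j : ℤ) < 0 → w (i : ℤ) < w (j : ℤ))}

/-- The product `r_{i_1} ⋯ r_{i_l}` for a sequence `i : Fin l → ℕ`. -/
def prodR {l : ℕ} (i : Fin l → ℕ) : Equiv.Perm ℤ := (List.ofFn fun k => r (i k)).prod

/-- `(l, α, β, σ)` is a decomposition of `w` as in the decomposition lemma:
`l ≤ n`, `α, β ∈ Y_{l,n-l}`, `σ ∈ 𝔖_{l,n-l}` and `w = α a_l σ β⁻¹`. -/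
def IsDecomp (n : ℕ) (w : Equiv.Perm ℤ) (l : ℕ) (α β σ : Equiv.Perm ℤ) : Prop :=
  l ≤ n ∧ α ∈ Y n l ∧ β ∈ Y n l ∧ σ ∈ SymP n l ∧ w = α * a l * σ * β⁻¹


/-- Explicit formula for `r m` as a function (for `m ≥ 1`). -/
def rFun (m : ℤ) : ℤ → ℤ := fun k =>
  if k = 1 then -m
  else if 2 ≤ k ∧ k ≤ m then k - 1
  else if k = -1 then m
  else if -m ≤ k ∧ k ≤ -2 then k + 1
  else k

/-- Explicit formula for `a l` as a function. -/
def aFun (l : ℤ) : ℤ → ℤ := fun k =>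
  if 1 ≤ k ∧ k ≤ l then k - (l + 1)
  else if -l ≤ k ∧ k ≤ -1 then k + (l + 1)
  else k

lemma s_apply (i : ℕ) (hi : 1 ≤ i) (k : ℤ) :
    s i k = if k = (i : ℤ) then (i : ℤ) + 1 else if k = (i : ℤ) + 1 then (i : ℤ)
      else if k = -(i : ℤ) then -((i : ℤ) + 1) else if k = -((i : ℤ) + 1) then -(i : ℤ)
      else k := by
  have hi' : (1 : ℤ) ≤ (i : ℤ) := by exact_mod_cast hi
  simp only [s, Equiv.Perm.mul_apply, Equiv.swap_apply_def]
  split_ifs <;> omega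

lemma r_apply (m : ℕ) (hm : 1 ≤ m) (k : ℤ) : r m k = rFun (m : ℤ) k := by
  induction m with
  | zero => omega
  | succ m ih =>
    rcases Nat.eq_or_lt_of_le hm with h1 | h1
    · have : m = 0 := by omega
      subst this
      show t k = rFun ((1 : ℕ) : ℤ) k
      simp only [t, rFun, Equiv.swap_apply_def]
      split_ifs <;> omega
    · have hm1 : 1 ≤ m := by omega
      have hr : r (m + 1) = s m * r m := by
        cases m with
        | zero => omega
        | succ m => rfl
      rw [hr, Equiv.Perm.mul_apply, ih hm1, s_apply m hm1]
      simp only [rFun]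
      push_cast
      split_ifs <;> omega

lemma a_apply (l : ℕ) (k : ℤ) : a l k = aFun (l : ℤ) k := by
  induction l generalizing k with
  | zero =>
    simp only [a, aFun, Equiv.Perm.one_apply]
    split_ifs <;> omega
  | succ l ih =>
    show (a l * r (l + 1)) k = _
    rw [Equiv.Perm.mul_apply, r_apply (l + 1) (by omega), ih]
    simp only [rFun, aFun]
    push_cast
    split_ifs <;> omega

lemma a_mul_self (l : ℕ) : a l * a l = 1 := by
  ext k
  rw [Equiv.Perm.mul_apply, a_apply, a_apply]
  simp only [aFun, Equiv.Perm.one_apply]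
  split_ifs <;> omega

lemma a_inv (l : ℕ) : (a l)⁻¹ = a l :=
  inv_eq_of_mul_eq_one_right (a_mul_self l)

set_option maxHeartbeats 2000000 in
lemma conj_lt (l i : ℕ) (hi1 : 1 ≤ i) (hil : i < l) :
    a l * s i * a l = s (l - i) := by
  ext k
  have hcast : ((l - i : ℕ) : ℤ) = (l : ℤ) - (i : ℤ) := by
    push_cast [Nat.cast_sub hil.le]; ring
  simp only [Equiv.Perm.mul_apply]
  rw [a_apply, s_apply i hi1, s_apply (l - i) (by omega), hcast]
  simp only [aFun]
  have hi1' : (1 : ℤ) ≤ (i : ℤ) := by exact_mod_cast hi1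
  have hil' : (i : ℤ) < (l : ℤ) := by exact_mod_cast hil
  rw [a_apply]
  simp only [aFun]
  split_ifs <;> omega

set_option maxHeartbeats 2000000 in
lemma conj_gt (l i : ℕ) (hli : l < i) :
    a l * s i * a l = s i := by
  ext k
  have hi1 : 1 ≤ i := by omega
  simp only [Equiv.Perm.mul_apply]
  rw [a_apply, s_apply i hi1, s_apply i hi1]
  simp only [aFun]
  have hli' : (l : ℤ) < (i : ℤ) := by exact_mod_cast hli
  rw [a_apply]
  simp only [aFun]
  split_ifs <;> omega

/-- for `0 ≤ l ≤ n`: `a_l⁻¹ = a_l`; for `1 ≤ i ≤ n-1` with `i ≠ l`,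
`a_l s_i a_l = s_{l-i}` if `i < l` and `a_l s_i a_l = s_i` if `i > l`; in
particular `a_l` normalizes `𝔖_{l,n-l}`. -/
theorem stmt15 (n l : ℕ) (hl : l ≤ n) :
    (a l)⁻¹ = a l ∧
    (∀ i : ℕ, 1 ≤ i → i < n → i ≠ l →
      (i < l → a l * s i * a l = s (l - i)) ∧ (l < i → a l * s i * a l = s i)) ∧
    (∀ u ∈ SymP n l, a l * u * (a l)⁻¹ ∈ SymP n l) := by
  refine ⟨a_inv l, fun i hi1 hin hil => ⟨fun h => conj_lt l i hi1 h, fun h => conj_gt l i h⟩, ?_⟩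
  intro u hu
  have hmap : (SymP n l).map (MulAut.conj (a l)).toMonoidHom ≤ SymP n l := by
    rw [SymP, MonoidHom.map_closure]
    apply Subgroup.closure_le _ |>.mpr
    rintro x ⟨y, ⟨i, hi1, hin, hil, rfl⟩, rfl⟩
    have hconj : (MulAut.conj (a l)).toMonoidHom (s i) = a l * s i * a l := by
      simp [MulAut.conj_apply, a_inv]
    rw [hconj]
    rcases lt_or_gt_of_ne hil with h | h
    · rw [conj_lt l i hi1 h]
      exact Subgroup.subset_closure ⟨l - i, by omega, by omega, by omega, rfl⟩
    · rw [conj_gt l i h]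
      exact Subgroup.subset_closure ⟨i, hi1, hin, hil, rfl⟩
  have : a l * u * (a l)⁻¹ = (MulAut.conj (a l)).toMonoidHom u := by
    simp [MulAut.conj_apply]
  rw [this]
  exact hmap ⟨u, hu, rfl⟩

end TypeB
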